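/- Every 4-dimensional real nilpotent Lie algebra 𝔤 admits a basis e₁, e₂, e₃, e₄ such that one of the following holds (all brackets among basis vectors other than those listed, and those forced by antisymmetry, are zero): (a) all brackets of basis vectors vanish, so 𝔤 ≅ ℝ⁴; (b) the only nonzero bracket among basis vectors is ⁅e₃, e₂⁆ = e₁, so 𝔤 ≅ ℝ ⊕ 𝔥₃; (c) the only nonzero brackets among basis vectors are ⁅e₄, e₃⁆ = e₂ and ⁅e₄, e₂⁆ = e₁, so 𝔤 ≅ 𝔫₄. -/

import Mathlib

open Module

section Helpers

variable {L : Type} [LieRing L] [LieAlgebra ℝ L]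

lemma aux_bracket_span {W : Submodule ℝ L} {S T : Set L}
    (h : ∀ x ∈ S, ∀ y ∈ T, ⁅x, y⁆ ∈ W) :
    ∀ x ∈ Submodule.span ℝ S, ∀ y ∈ Submodule.span ℝ T, ⁅x, y⁆ ∈ W := by
  intro x hx
  induction hx using Submodule.span_induction with
  | mem x hxS =>
    intro y hy
    induction hy using Submodule.span_induction with
    | mem y hyT => exact h _ hxS _ hyT
    | zero => simp
    | add _ _ _ _ h1 h2 => rw [lie_add]; exact W.add_mem h1 h2
    | smul c _ _ h1 => rw [lie_smul]; exact W.smul_mem c h1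
  | zero => intro y hy; simp
  | add _ _ _ _ h1 h2 => intro y hy; rw [add_lie]; exact W.add_mem (h1 y hy) (h2 y hy)
  | smul c _ _ h1 => intro y hy; rw [smul_lie]; exact W.smul_mem c (h1 y hy)

lemma aux_mem_lcs1 (x y : L) : ⁅x, y⁆ ∈ LieModule.lowerCentralSeries ℝ L L 1 := by
  rw [show (1 : ℕ) = 0 + 1 from rfl, LieModule.lowerCentralSeries_succ]
  exact LieSubmodule.lie_mem_lie (LieSubmodule.mem_top _)
    (by rw [LieModule.lowerCentralSeries_zero]; exact LieSubmodule.mem_top _)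

lemma aux_mem_lcs_succ (k : ℕ) (x n : L) (hn : n ∈ LieModule.lowerCentralSeries ℝ L L k) :
    ⁅x, n⁆ ∈ LieModule.lowerCentralSeries ℝ L L (k + 1) := by
  rw [LieModule.lowerCentralSeries_succ]
  exact LieSubmodule.lie_mem_lie (LieSubmodule.mem_top _) hn

lemma aux_lcs1_le {W : Submodule ℝ L} (h : ∀ x y : L, ⁅x, y⁆ ∈ W) :
    ∀ m ∈ LieModule.lowerCentralSeries ℝ L L 1, m ∈ W := by
  intro m hm
  rw [show (1 : ℕ) = 0 + 1 from rfl, LieModule.lowerCentralSeries_succ,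
    LieModule.lowerCentralSeries_zero] at hm
  rw [← LieSubmodule.mem_toSubmodule, LieSubmodule.lieIdeal_oper_eq_linear_span'] at hm
  refine Submodule.span_le.mpr ?_ hm
  rintro m ⟨x, -, y, -, rfl⟩
  exact h x y

lemma aux_lcs2_le {W : Submodule ℝ L}
    (h : ∀ x n : L, n ∈ LieModule.lowerCentralSeries ℝ L L 1 → ⁅x, n⁆ ∈ W) :
    ∀ m ∈ LieModule.lowerCentralSeries ℝ L L 2, m ∈ W := by
  intro m hm
  rw [show (2 : ℕ) = 1 + 1 from rfl, LieModule.lowerCentralSeries_succ] at hm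
  rw [← LieSubmodule.mem_toSubmodule, LieSubmodule.lieIdeal_oper_eq_linear_span'] at hm
  refine Submodule.span_le.mpr ?_ hm
  rintro m ⟨x, -, n, hn, rfl⟩
  exact h x n hn

lemma aux_lcs_eq_bot [LieRing.IsNilpotent L] {k : ℕ}
    (h : LieModule.lowerCentralSeries ℝ L L k ≤ LieModule.lowerCentralSeries ℝ L L (k + 1)) :
    LieModule.lowerCentralSeries ℝ L L k = ⊥ := by
  have heq : LieModule.lowerCentralSeries ℝ L L (k + 1) = LieModule.lowerCentralSeries ℝ L L k :=
    le_antisymm (LieModule.antitone_lowerCentralSeries ℝ L L (Nat.le_succ k)) h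
  have key : ∀ m, LieModule.lowerCentralSeries ℝ L L (k + m)
      = LieModule.lowerCentralSeries ℝ L L k := by
    intro m
    induction m with
    | zero => rfl
    | succ m ih =>
      rw [show k + (m + 1) = (k + m) + 1 by ring, LieModule.lowerCentralSeries_succ, ih,
        ← LieModule.lowerCentralSeries_succ, heq]
  obtain ⟨n, hn⟩ := LieModule.IsNilpotent.nilpotent (R := ℝ) (L := L) (M := L)
  rw [eq_bot_iff, ← hn, ← key n]
  exact LieModule.antitone_lowerCentralSeries ℝ L L (by omega)

lemma aux_finrank_sup_le [FiniteDimensional ℝ L] (A B : Submodule ℝ L) :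
    finrank ℝ (A ⊔ B : Submodule ℝ L) ≤ finrank ℝ A + finrank ℝ B := by
  have := Submodule.finrank_sup_add_finrank_inf_eq A B
  omega

lemma aux_frs [FiniteDimensional ℝ L] (v : L) : finrank ℝ (ℝ ∙ v : Submodule ℝ L) ≤ 1 := by
  rcases eq_or_ne v 0 with rfl | hv
  · rw [Submodule.span_zero_singleton]; simp
  · rw [finrank_span_singleton hv]

end Helpers

/-- Every 4-dimensional real nilpotent Lie algebra `𝔤` admits a basis
`e₁, e₂, e₃, e₄` (here `b 0, b 1, b 2, b 3`) such that one of the following holds, all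
brackets among basis vectors other than those listed (and those forced by
antisymmetry) being zero:
(a) all brackets of basis vectors vanish (`𝔤 ≅ ℝ⁴`);
(b) the only nonzero bracket is `⁅e₃, e₂⁆ = e₁` (`𝔤 ≅ ℝ ⊕ 𝔥₃`);
(c) the only nonzero brackets are `⁅e₄, e₃⁆ = e₂` and `⁅e₄, e₂⁆ = e₁` (`𝔤 ≅ 𝔫₄`). -/
theorem stmt5
    (L : Type) [LieRing L] [LieAlgebra ℝ L] [FiniteDimensional ℝ L]
    [LieRing.IsNilpotent L]
    (hdim : finrank ℝ L = 4) :
    ∃ b : Basis (Fin 4) ℝ L,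
      (∀ i j : Fin 4, ⁅b i, b j⁆ = 0) ∨
      (∀ i j : Fin 4, ⁅b i, b j⁆ =
        if (i, j) = (2, 1) then b 0 else if (i, j) = (1, 2) then -b 0 else 0) ∨
      (∀ i j : Fin 4, ⁅b i, b j⁆ =
        if (i, j) = (3, 2) then b 1 else if (i, j) = (2, 3) then -b 1
        else if (i, j) = (3, 1) then b 0 else if (i, j) = (1, 3) then -b 0 else 0) := by
  classical
  -- basic facts about the lower central series
  have hstrict : ∀ k : ℕ, LieModule.lowerCentralSeries ℝ L L k ≠ ⊥ →
      finrank ℝ (LieModule.lowerCentralSeries ℝ L L (k + 1)).toSubmodule <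
      finrank ℝ (LieModule.lowerCentralSeries ℝ L L k).toSubmodule := by
    intro k hk
    apply Submodule.finrank_lt_finrank_of_lt
    refine lt_of_le_of_ne
      ((LieSubmodule.toSubmodule_le_toSubmodule _ _).mpr
        (LieModule.antitone_lowerCentralSeries ℝ L L (Nat.le_succ k))) ?_
    intro heq
    exact hk (aux_lcs_eq_bot (le_of_eq ((LieSubmodule.toSubmodule_inj _ _).mp heq).symm))
  have hbot_of_fr : ∀ N : LieSubmodule ℝ L L, finrank ℝ N.toSubmodule = 0 → N = ⊥ := by
    intro N hN
    have h := Submodule.finrank_eq_zero.mp hN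
    exact (LieSubmodule.toSubmodule_inj _ _).mp
      (by rw [h, LieSubmodule.bot_toSubmodule])
  have hfr_bot : finrank ℝ ((⊥ : LieSubmodule ℝ L L)).toSubmodule = 0 := by
    rw [LieSubmodule.bot_toSubmodule, finrank_bot]
  have htopbot : (⊤ : LieSubmodule ℝ L L) ≠ ⊥ := by
    intro h
    have h4 : finrank ℝ ((⊤ : LieSubmodule ℝ L L)).toSubmodule = 4 := by
      rw [LieSubmodule.top_toSubmodule, finrank_top, hdim]
    rw [h, hfr_bot] at h4
    omega
  have hfr0 : finrank ℝ (LieModule.lowerCentralSeries ℝ L L 0).toSubmodule = 4 := by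
    rw [LieModule.lowerCentralSeries_zero, LieSubmodule.top_toSubmodule, finrank_top, hdim]
  have hD4 : finrank ℝ (LieModule.lowerCentralSeries ℝ L L 1).toSubmodule < 4 := by
    have h := hstrict 0 (by rw [LieModule.lowerCentralSeries_zero]; exact htopbot)
    rw [show (0 : ℕ) + 1 = 1 from rfl] at h
    omega
  -- dimension 3 for the derived algebra is impossible
  have hcase3 : finrank ℝ (LieModule.lowerCentralSeries ℝ L L 1).toSubmodule ≠ 3 := by
    intro h3
    have hne : LieModule.lowerCentralSeries ℝ L L 1 ≠ ⊥ := by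
      intro hb; rw [hb, hfr_bot] at h3; omega
    have hDlt : (LieModule.lowerCentralSeries ℝ L L 1).toSubmodule < ⊤ := by
      refine lt_top_iff_ne_top.mpr fun he => ?_
      rw [he, finrank_top, hdim] at h3; omega
    obtain ⟨u, -, hu⟩ := SetLike.exists_of_lt hDlt
    have hW : (ℝ ∙ u) ⊔ (LieModule.lowerCentralSeries ℝ L L 1).toSubmodule = ⊤ := by
      have hlt' : (LieModule.lowerCentralSeries ℝ L L 1).toSubmodule <
          (ℝ ∙ u) ⊔ (LieModule.lowerCentralSeries ℝ L L 1).toSubmodule := by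
        refine lt_of_le_of_ne le_sup_right fun he => hu ?_
        rw [he]
        exact Submodule.mem_sup_left (Submodule.mem_span_singleton_self u)
      have h4 := Submodule.finrank_lt_finrank_of_lt hlt'
      have h5 := Submodule.finrank_le
        ((ℝ ∙ u) ⊔ (LieModule.lowerCentralSeries ℝ L L 1).toSubmodule)
      rw [hdim] at h5
      exact Submodule.eq_top_of_finrank_eq (by omega)
    have hle : LieModule.lowerCentralSeries ℝ L L 1 ≤ LieModule.lowerCentralSeries ℝ L L (1 + 1) := by
      rw [← LieSubmodule.toSubmodule_le_toSubmodule]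
      intro m hm
      refine aux_lcs1_le (fun x y => ?_) m hm
      have hsp : Submodule.span ℝ
          ({u} ∪ ((LieModule.lowerCentralSeries ℝ L L 1).toSubmodule : Set L)) = ⊤ := by
        rw [Submodule.span_union, Submodule.span_eq]
        exact hW
      have key : ∀ p ∈ ({u} ∪ ((LieModule.lowerCentralSeries ℝ L L 1).toSubmodule : Set L)),
          ∀ q ∈ ({u} ∪ ((LieModule.lowerCentralSeries ℝ L L 1).toSubmodule : Set L)),
          ⁅p, q⁆ ∈ (LieModule.lowerCentralSeries ℝ L L (1 + 1)).toSubmodule := by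
        rintro p hp q hq
        rcases hq with rfl | hq
        · rcases hp with rfl | hp
          · simp
          · rw [← lie_skew]
            exact neg_mem (aux_mem_lcs_succ 1 q p hp)
        · exact aux_mem_lcs_succ 1 p q hq
      exact aux_bracket_span key x (hsp ▸ Submodule.mem_top) y (hsp ▸ Submodule.mem_top)
    exact hne (aux_lcs_eq_bot hle)
  have hcases : finrank ℝ (LieModule.lowerCentralSeries ℝ L L 1).toSubmodule = 0 ∨
      finrank ℝ (LieModule.lowerCentralSeries ℝ L L 1).toSubmodule = 1 ∨
      finrank ℝ (LieModule.lowerCentralSeries ℝ L L 1).toSubmodule = 2 := by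
    omega
  rcases hcases with h0 | h1 | h2
  · -- abelian case
    have hb : LieModule.lowerCentralSeries ℝ L L 1 = ⊥ := hbot_of_fr _ h0
    refine ⟨Module.finBasisOfFinrankEq ℝ L hdim, Or.inl fun i j => ?_⟩
    have := aux_mem_lcs1 (Module.finBasisOfFinrankEq ℝ L hdim i) (Module.finBasisOfFinrankEq ℝ L hdim j)
    rw [hb] at this
    exact (LieSubmodule.mem_bot _).mp this
  · -- Heisenberg ⊕ ℝ case
    have hne1 : LieModule.lowerCentralSeries ℝ L L 1 ≠ ⊥ := by
      intro hb; rw [hb, hfr_bot] at h1; omega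
    have h2bot : LieModule.lowerCentralSeries ℝ L L 2 = ⊥ := by
      apply hbot_of_fr
      have h := hstrict 1 hne1
      rw [show (1 : ℕ) + 1 = 2 from rfl] at h
      omega
    have hbr2 : ∀ x d : L, d ∈ LieModule.lowerCentralSeries ℝ L L 1 → ⁅x, d⁆ = 0 := by
      intro x d hd
      have h := aux_mem_lcs_succ 1 x d hd
      rw [show (1 : ℕ) + 1 = 2 from rfl, h2bot] at h
      exact (LieSubmodule.mem_bot _).mp h
    obtain ⟨z, hzmem, hz0, hspanz⟩ :
        ∃ z : L, z ∈ LieModule.lowerCentralSeries ℝ L L 1 ∧ z ≠ 0 ∧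
          (ℝ ∙ z) = (LieModule.lowerCentralSeries ℝ L L 1).toSubmodule := by
      have bD := Module.finBasisOfFinrankEq ℝ
        (LieModule.lowerCentralSeries ℝ L L 1).toSubmodule h1
      refine ⟨(bD 0 : L), (bD 0).2, ?_, ?_⟩
      · have := bD.ne_zero 0
        simpa [Submodule.coe_eq_zero] using this
      · apply Submodule.eq_of_le_of_finrank_eq
        · rw [Submodule.span_singleton_le_iff_mem]; exact (bD 0).2
        · rw [finrank_span_singleton, h1]
          have := bD.ne_zero 0
          simpa [Submodule.coe_eq_zero] using this
    have hza : ∀ a : L, ⁅a, z⁆ = 0 := fun a => hbr2 a z hzmem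
    have hzb : ∀ a : L, ⁅z, a⁆ = 0 := fun a => by rw [← lie_skew, hza a, neg_zero]
    have hdz : ∀ d : L, d ∈ LieModule.lowerCentralSeries ℝ L L 1 → ∃ c : ℝ, c • z = d := by
      intro d hd
      have : d ∈ (ℝ ∙ z) := by rw [hspanz]; exact hd
      exact Submodule.mem_span_singleton.mp this
    have hex : ∃ x y : L, ⁅x, y⁆ ≠ 0 := by
      by_contra hno
      push_neg at hno
      apply hne1
      apply hbot_of_fr
      have hle : (LieModule.lowerCentralSeries ℝ L L 1).toSubmodule ≤ ⊥ :=
        fun m hm => aux_lcs1_le (fun x y => by rw [hno x y]; exact Submodule.zero_mem ⊥) m hm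
      have : (LieModule.lowerCentralSeries ℝ L L 1).toSubmodule = ⊥ := le_bot_iff.mp hle
      rw [this, finrank_bot]
    obtain ⟨x₀, y, hxy⟩ := hex
    obtain ⟨c, hc⟩ := hdz _ (aux_mem_lcs1 x₀ y)
    have hc0 : c ≠ 0 := by rintro rfl; rw [zero_smul] at hc; exact hxy hc.symm
    obtain ⟨x, hxdef⟩ : ∃ x : L, x = c⁻¹ • x₀ := ⟨_, rfl⟩
    have hx : ⁅x, y⁆ = z := by
      rw [hxdef, smul_lie, ← hc, smul_smul, inv_mul_cancel₀ hc0, one_smul]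
    have hyx : ⁅y, x⁆ = -z := by rw [← lie_skew, hx]
    -- pick u outside the span of z, y, x
    have hzV : z ∈ (ℝ ∙ z) ⊔ ((ℝ ∙ y) ⊔ (ℝ ∙ x)) :=
      Submodule.mem_sup_left (Submodule.mem_span_singleton_self z)
    have hyV : y ∈ (ℝ ∙ z) ⊔ ((ℝ ∙ y) ⊔ (ℝ ∙ x)) :=
      Submodule.mem_sup_right (Submodule.mem_sup_left (Submodule.mem_span_singleton_self y))
    have hxV : x ∈ (ℝ ∙ z) ⊔ ((ℝ ∙ y) ⊔ (ℝ ∙ x)) :=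
      Submodule.mem_sup_right (Submodule.mem_sup_right (Submodule.mem_span_singleton_self x))
    obtain ⟨u, -, huV⟩ : ∃ u, u ∈ (⊤ : Submodule ℝ L) ∧
        u ∉ (ℝ ∙ z) ⊔ ((ℝ ∙ y) ⊔ (ℝ ∙ x)) := by
      apply SetLike.exists_of_lt
      refine lt_top_iff_ne_top.mpr fun he => ?_
      have hf : finrank ℝ ((ℝ ∙ z) ⊔ ((ℝ ∙ y) ⊔ (ℝ ∙ x)) : Submodule ℝ L) ≤ 3 := by
        have t1 := aux_finrank_sup_le (ℝ ∙ y) (ℝ ∙ x)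
        have t2 := aux_finrank_sup_le (ℝ ∙ z) ((ℝ ∙ y) ⊔ (ℝ ∙ x))
        have := aux_frs (L := L) z
        have := aux_frs (L := L) y
        have := aux_frs (L := L) x
        omega
      rw [he, finrank_top, hdim] at hf
      omega
    obtain ⟨α, hα⟩ := hdz _ (aux_mem_lcs1 u x)
    obtain ⟨β, hβ⟩ := hdz _ (aux_mem_lcs1 u y)
    obtain ⟨w, hwdef⟩ : ∃ w : L, w = u + α • y - β • x := ⟨_, rfl⟩
    have hwx : ⁅w, x⁆ = 0 := by
      rw [hwdef, sub_lie, add_lie, smul_lie, smul_lie, ← hα, hyx, lie_self,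
        smul_neg, smul_zero, sub_zero, add_neg_cancel]
    have hwy : ⁅w, y⁆ = 0 := by
      rw [hwdef, sub_lie, add_lie, smul_lie, smul_lie, ← hβ, lie_self, hx,
        smul_zero, add_zero, sub_self]
    have hwz : ⁅w, z⁆ = 0 := hza w
    have hxw : ⁅x, w⁆ = 0 := by rw [← lie_skew, hwx, neg_zero]
    have hyw : ⁅y, w⁆ = 0 := by rw [← lie_skew, hwy, neg_zero]
    have hzw : ⁅z, w⁆ = 0 := hzb w
    have hwnV : w ∉ (ℝ ∙ z) ⊔ ((ℝ ∙ y) ⊔ (ℝ ∙ x)) := by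
      intro hw
      apply huV
      have : u = w - α • y + β • x := by rw [hwdef]; abel
      rw [this]
      refine Submodule.add_mem _ (Submodule.sub_mem _ hw ?_) ?_
      · exact Submodule.smul_mem _ _ hyV
      · exact Submodule.smul_mem _ _ hxV
    -- linear independence
    have hw0 : w ≠ 0 := by
      rintro rfl
      exact hwnV (Submodule.zero_mem _)
    have li : LinearIndependent ℝ ![z, y, x, w] := by
      rw [show (![z, y, x, w]) = Fin.cons z ![y, x, w] from rfl, linearIndependent_fin_cons]
      constructor
      · rw [show (![y, x, w]) = Fin.cons y ![x, w] from rfl, linearIndependent_fin_cons]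
        constructor
        · rw [show (![x, w]) = Fin.cons x ![w] from rfl, linearIndependent_fin_cons]
          constructor
          · exact linearIndependent_unique_iff.mpr hw0
          · -- x ∉ span {w}
            intro hmem
            obtain ⟨cc, hcc⟩ := (Submodule.mem_span_range_iff_exists_fun ℝ).mp hmem
            rw [Fin.sum_univ_one] at hcc
            apply hz0
            rw [← hx, ← hcc]
            simp only [Matrix.cons_val_zero, smul_lie, hwy, smul_zero]
        · -- y ∉ span {x, w}
          intro hmem
          obtain ⟨cc, hcc⟩ := (Submodule.mem_span_range_iff_exists_fun ℝ).mp hmem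
          rw [Fin.sum_univ_two] at hcc
          apply hz0
          rw [← hx, ← hcc]
          simp only [Matrix.cons_val_zero, Matrix.cons_val_one, Matrix.head_cons, lie_add,
            lie_smul, lie_self, hxw, smul_zero, add_zero]
      · -- z ∉ span {y, x, w}
        intro hmem
        obtain ⟨cc, hcc⟩ := (Submodule.mem_span_range_iff_exists_fun ℝ).mp hmem
        rw [Fin.sum_univ_three] at hcc
        simp only [Matrix.cons_val_zero, Matrix.cons_val_one, Matrix.head_cons,
          Matrix.cons_val_two, Matrix.tail_cons] at hcc
        -- bracket with x kills everything except cc 0 • z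
        have e1 : cc 0 • z = 0 := by
          have := hza x
          rw [← hcc] at this
          simpa only [lie_add, lie_smul, hx, lie_self, hxw, smul_zero, add_zero, zero_add]
            using this
        have hcc0 : cc 0 = 0 := by
          rcases smul_eq_zero.mp e1 with h | h
          · exact h
          · exact absurd h hz0
        -- bracket with y kills everything except cc 1 • (-z)
        have e2 : cc 1 • z = 0 := by
          have h' := hzb y
          rw [← hcc, add_lie, add_lie, smul_lie, smul_lie, smul_lie, lie_self, hx, hwy,
            smul_zero, smul_zero, zero_add, add_zero] at h'
          exact h' 
        have hcc1 : cc 1 = 0 := by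
          rcases smul_eq_zero.mp e2 with h | h
          · exact h
          · exact absurd h hz0
        rw [hcc0, hcc1, zero_smul, zero_smul, zero_add, zero_add] at hcc
        -- so z = cc 2 • w, contradicting w ∉ V
        have hc2 : cc 2 ≠ 0 := by
          rintro h
          rw [h, zero_smul] at hcc
          exact hz0 hcc.symm
        apply hwnV
        have : w = (cc 2)⁻¹ • z := by
          rw [← hcc, smul_smul, inv_mul_cancel₀ hc2, one_smul]
        rw [this]
        exact Submodule.smul_mem _ _ hzV
    refine ⟨basisOfLinearIndependentOfCardEqFinrank li (by simp [hdim]),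
      Or.inr (Or.inl fun i j => ?_)⟩
    have hb : ∀ i, basisOfLinearIndependentOfCardEqFinrank li (by simp [hdim]) i
        = ![z, y, x, w] i := fun i => by
      rw [coe_basisOfLinearIndependentOfCardEqFinrank]
    fin_cases i <;> fin_cases j <;>
      simp [hb, Prod.ext_iff, hza, hzb, hx, hyx, hwx, hwy, hwz, hxw, hyw, hzw, lie_self]
  · -- 𝔫₄ case
    have hne1 : LieModule.lowerCentralSeries ℝ L L 1 ≠ ⊥ := by
      intro hb; rw [hb, hfr_bot] at h2; omega
    have hfrC_lt : finrank ℝ (LieModule.lowerCentralSeries ℝ L L 2).toSubmodule < 2 := by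
      have h := hstrict 1 hne1
      rw [show (1 : ℕ) + 1 = 2 from rfl] at h
      omega
    have hDlt : (LieModule.lowerCentralSeries ℝ L L 1).toSubmodule < ⊤ := by
      refine lt_top_iff_ne_top.mpr fun he => ?_
      rw [he, finrank_top, hdim] at h2; omega
    -- the second term of the lower central series is nonzero
    have hCne : LieModule.lowerCentralSeries ℝ L L 2 ≠ ⊥ := by
      intro hC
      have hC0 : ∀ x d : L, d ∈ LieModule.lowerCentralSeries ℝ L L 1 → ⁅x, d⁆ = 0 := by
        intro x d hd
        have h := aux_mem_lcs_succ 1 x d hd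
        rw [show (1 : ℕ) + 1 = 2 from rfl, hC] at h
        exact (LieSubmodule.mem_bot _).mp h
      obtain ⟨u, -, hu⟩ := SetLike.exists_of_lt hDlt
      have hlt1 : (LieModule.lowerCentralSeries ℝ L L 1).toSubmodule <
          (ℝ ∙ u) ⊔ (LieModule.lowerCentralSeries ℝ L L 1).toSubmodule := by
        refine lt_of_le_of_ne le_sup_right fun he => hu ?_
        rw [he]; exact Submodule.mem_sup_left (Submodule.mem_span_singleton_self u)
      obtain ⟨v, -, hv⟩ : ∃ v, v ∈ (⊤ : Submodule ℝ L) ∧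
          v ∉ (ℝ ∙ u) ⊔ (LieModule.lowerCentralSeries ℝ L L 1).toSubmodule := by
        apply SetLike.exists_of_lt
        refine lt_top_iff_ne_top.mpr fun he => ?_
        have t1 := aux_finrank_sup_le (ℝ ∙ u)
          (LieModule.lowerCentralSeries ℝ L L 1).toSubmodule
        have t2 := aux_frs (L := L) u
        rw [he, finrank_top, hdim] at t1
        omega
      have hlt2 : (ℝ ∙ u) ⊔ (LieModule.lowerCentralSeries ℝ L L 1).toSubmodule <
          (ℝ ∙ v) ⊔ ((ℝ ∙ u) ⊔ (LieModule.lowerCentralSeries ℝ L L 1).toSubmodule) := by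
        refine lt_of_le_of_ne le_sup_right fun he => hv ?_
        rw [he]; exact Submodule.mem_sup_left (Submodule.mem_span_singleton_self v)
      have hsp : Submodule.span ℝ
          ({v} ∪ ({u} ∪ ((LieModule.lowerCentralSeries ℝ L L 1).toSubmodule : Set L))) = ⊤ := by
        rw [Submodule.span_union, Submodule.span_union, Submodule.span_eq]
        have f1 := Submodule.finrank_lt_finrank_of_lt hlt1
        have f2 := Submodule.finrank_lt_finrank_of_lt hlt2
        have f3 := Submodule.finrank_le
          ((ℝ ∙ v) ⊔ ((ℝ ∙ u) ⊔ (LieModule.lowerCentralSeries ℝ L L 1).toSubmodule))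
        rw [hdim] at f3
        exact Submodule.eq_top_of_finrank_eq (by omega)
      have key : ∀ p ∈ ({v} ∪ ({u} ∪
            ((LieModule.lowerCentralSeries ℝ L L 1).toSubmodule : Set L))),
          ∀ q ∈ ({v} ∪ ({u} ∪
            ((LieModule.lowerCentralSeries ℝ L L 1).toSubmodule : Set L))),
          ⁅p, q⁆ ∈ (ℝ ∙ ⁅u, v⁆ : Submodule ℝ L) := by
        rintro p (rfl | rfl | hp) q (rfl | rfl | hq)
        · rw [lie_self]; exact Submodule.zero_mem _
        · rw [show ⁅p, q⁆ = -⁅q, p⁆ from (lie_skew p q).symm]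
          exact Submodule.neg_mem _ (Submodule.mem_span_singleton_self _)
        · rw [hC0 _ _ hq]; exact Submodule.zero_mem _
        · exact Submodule.mem_span_singleton_self _
        · rw [lie_self]; exact Submodule.zero_mem _
        · rw [hC0 _ _ hq]; exact Submodule.zero_mem _
        · rw [show ⁅p, q⁆ = -⁅q, p⁆ from (lie_skew p q).symm, hC0 _ _ hp, neg_zero]
          exact Submodule.zero_mem _
        · rw [show ⁅p, q⁆ = -⁅q, p⁆ from (lie_skew p q).symm, hC0 _ _ hp, neg_zero]
          exact Submodule.zero_mem _
        · rw [hC0 _ _ hq]; exact Submodule.zero_mem _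
      have hDle : (LieModule.lowerCentralSeries ℝ L L 1).toSubmodule ≤
          (ℝ ∙ ⁅u, v⁆ : Submodule ℝ L) := fun m hm =>
        aux_lcs1_le (fun x y =>
          aux_bracket_span key x (hsp ▸ Submodule.mem_top) y (hsp ▸ Submodule.mem_top)) m hm
      have := Submodule.finrank_mono hDle
      have := aux_frs (L := L) ⁅u, v⁆
      omega
    have hC1 : finrank ℝ (LieModule.lowerCentralSeries ℝ L L 2).toSubmodule = 1 := by
      have : finrank ℝ (LieModule.lowerCentralSeries ℝ L L 2).toSubmodule ≠ 0 :=
        fun h0 => hCne (hbot_of_fr _ h0)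
      omega
    have h3bot : LieModule.lowerCentralSeries ℝ L L 3 = ⊥ := by
      apply hbot_of_fr
      have h := hstrict 2 hCne
      rw [show (2 : ℕ) + 1 = 3 from rfl] at h
      omega
    have hza' : ∀ a n : L, n ∈ LieModule.lowerCentralSeries ℝ L L 2 → ⁅a, n⁆ = 0 := by
      intro a n hn
      have h := aux_mem_lcs_succ 2 a n hn
      rw [show (2 : ℕ) + 1 = 3 from rfl, h3bot] at h
      exact (LieSubmodule.mem_bot _).mp h
    obtain ⟨z, hzC, hz0, hspanz⟩ :
        ∃ z : L, z ∈ LieModule.lowerCentralSeries ℝ L L 2 ∧ z ≠ 0 ∧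
          (ℝ ∙ z) = (LieModule.lowerCentralSeries ℝ L L 2).toSubmodule := by
      have bC := Module.finBasisOfFinrankEq ℝ
        (LieModule.lowerCentralSeries ℝ L L 2).toSubmodule hC1
      refine ⟨(bC 0 : L), (bC 0).2, ?_, ?_⟩
      · have := bC.ne_zero 0
        simpa [Submodule.coe_eq_zero] using this
      · apply Submodule.eq_of_le_of_finrank_eq
        · rw [Submodule.span_singleton_le_iff_mem]; exact (bC 0).2
        · rw [finrank_span_singleton, hC1]
          have := bC.ne_zero 0
          simpa [Submodule.coe_eq_zero] using this
    have hza : ∀ a : L, ⁅a, z⁆ = 0 := fun a => hza' a z hzC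
    have hzb : ∀ a : L, ⁅z, a⁆ = 0 := fun a => by rw [← lie_skew, hza a, neg_zero]
    have hzD : z ∈ LieModule.lowerCentralSeries ℝ L L 1 :=
      LieModule.antitone_lowerCentralSeries ℝ L L (by omega : (1 : ℕ) ≤ 2) hzC
    have hdC : ∀ d : L, d ∈ LieModule.lowerCentralSeries ℝ L L 2 → ∃ c : ℝ, c • z = d := by
      intro d hd
      have : d ∈ (ℝ ∙ z) := by rw [hspanz]; exact hd
      exact Submodule.mem_span_singleton.mp this
    have hbrD : ∀ a d : L, d ∈ LieModule.lowerCentralSeries ℝ L L 1 →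
        ⁅a, d⁆ ∈ LieModule.lowerCentralSeries ℝ L L 2 := by
      intro a d hd
      have := aux_mem_lcs_succ 1 a d hd
      rwa [show (1 : ℕ) + 1 = 2 from rfl] at this
    have hCltD : (LieModule.lowerCentralSeries ℝ L L 2).toSubmodule <
        (LieModule.lowerCentralSeries ℝ L L 1).toSubmodule := by
      refine lt_of_le_of_ne ((LieSubmodule.toSubmodule_le_toSubmodule _ _).mpr
        (LieModule.antitone_lowerCentralSeries ℝ L L (by omega : (1 : ℕ) ≤ 2))) fun he => ?_
      rw [he] at hC1
      omega
    obtain ⟨w₀, hw₀D, hw₀C⟩ := SetLike.exists_of_lt hCltD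
    have hPle : Submodule.span ℝ {z, w₀} ≤ (LieModule.lowerCentralSeries ℝ L L 1).toSubmodule := by
      rw [Submodule.span_le]
      rintro p (rfl | rfl)
      · exact hzD
      · exact hw₀D
    have hPD : Submodule.span ℝ {z, w₀} = (LieModule.lowerCentralSeries ℝ L L 1).toSubmodule := by
      apply Submodule.eq_of_le_of_finrank_eq hPle
      have hltP : (LieModule.lowerCentralSeries ℝ L L 2).toSubmodule <
          Submodule.span ℝ {z, w₀} := by
        refine lt_of_le_of_ne ?_ fun he => hw₀C ?_
        · rw [← hspanz]
          exact Submodule.span_mono (by simp)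
        · rw [he]
          exact Submodule.subset_span (by simp)
      have f1 := Submodule.finrank_lt_finrank_of_lt hltP
      have f2 := Submodule.finrank_mono hPle
      omega
    have hdD : ∀ d : L, d ∈ LieModule.lowerCentralSeries ℝ L L 1 →
        ∃ a b : ℝ, a • z + b • w₀ = d := by
      intro d hd
      have : d ∈ Submodule.span ℝ {z, w₀} := by rw [hPD]; exact hd
      exact Submodule.mem_span_pair.mp this
    have hexw : ∃ e : L, ⁅e, w₀⁆ ≠ 0 := by
      by_contra hno
      push_neg at hno
      apply hCne
      apply hbot_of_fr
      have hle : (LieModule.lowerCentralSeries ℝ L L 2).toSubmodule ≤ ⊥ := by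
        intro m hm
        refine aux_lcs2_le (fun x n hn => ?_) m hm
        obtain ⟨a, b, hab⟩ := hdD n hn
        have hz : ⁅x, n⁆ = 0 := by
          rw [← hab, lie_add, lie_smul, lie_smul, hza, hno, smul_zero, smul_zero, add_zero]
        rw [hz]
        exact Submodule.zero_mem ⊥
      rw [le_bot_iff.mp hle, finrank_bot]
    obtain ⟨e₄, he₄⟩ := hexw
    obtain ⟨c, hc⟩ := hdC _ (hbrD e₄ w₀ hw₀D)
    have hc0 : c ≠ 0 := by rintro rfl; rw [zero_smul] at hc; exact he₄ hc.symm
    obtain ⟨w, hwdef⟩ : ∃ w : L, w = c⁻¹ • w₀ := ⟨_, rfl⟩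
    have hw4 : ⁅e₄, w⁆ = z := by
      rw [hwdef, lie_smul, ← hc, smul_smul, inv_mul_cancel₀ hc0, one_smul]
    have hwD : w ∈ LieModule.lowerCentralSeries ℝ L L 1 := by
      rw [hwdef]
      exact Submodule.smul_mem (LieModule.lowerCentralSeries ℝ L L 1).toSubmodule c⁻¹ hw₀D
    have hwC : w ∉ (LieModule.lowerCentralSeries ℝ L L 2).toSubmodule := by
      intro hw
      apply hw₀C
      have hw₀ : w₀ = c • w := by rw [hwdef, smul_smul, mul_inv_cancel₀ hc0, one_smul]
      rw [hw₀]
      exact Submodule.smul_mem _ _ hw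
    have hw0 : w ≠ 0 := by rintro rfl; rw [lie_zero] at hw4; exact hz0 hw4.symm
    have hzw : ⁅z, w⁆ = 0 := hzb w
    have hwz : ⁅w, z⁆ = 0 := hza w
    have hdD' : ∀ d : L, d ∈ LieModule.lowerCentralSeries ℝ L L 1 →
        ∃ a b : ℝ, a • z + b • w = d := by
      intro d hd
      obtain ⟨a, b, hab⟩ := hdD d hd
      refine ⟨a, b * c, ?_⟩
      rw [← hab, hwdef, smul_smul]
      congr 2
      field_simp
    have hdw0 : ∀ d : L, d ∈ LieModule.lowerCentralSeries ℝ L L 1 → ⁅d, w⁆ = 0 := by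
      intro d hd
      obtain ⟨a, b, hab⟩ := hdD' d hd
      rw [← hab, add_lie, smul_lie, smul_lie, hzw, lie_self, smul_zero, smul_zero, add_zero]
    have hDab : ∀ d d' : L, d ∈ LieModule.lowerCentralSeries ℝ L L 1 →
        d' ∈ LieModule.lowerCentralSeries ℝ L L 1 → ⁅d, d'⁆ = 0 := by
      intro d d' hd hd'
      obtain ⟨a, b, hab⟩ := hdD' d' hd'
      rw [← hab, lie_add, lie_smul, lie_smul, hza, hdw0 d hd, smul_zero, smul_zero, add_zero]
    have he₄D : e₄ ∉ (LieModule.lowerCentralSeries ℝ L L 1).toSubmodule := by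
      intro h4
      apply hz0
      rw [← hw4, hDab e₄ w h4 hwD]
    have he₄0 : e₄ ≠ 0 := by rintro rfl; rw [zero_lie] at hw4; exact hz0 hw4.symm
    have hzV : z ∈ (ℝ ∙ z) ⊔ ((ℝ ∙ w) ⊔ (ℝ ∙ e₄)) :=
      Submodule.mem_sup_left (Submodule.mem_span_singleton_self z)
    have hwV : w ∈ (ℝ ∙ z) ⊔ ((ℝ ∙ w) ⊔ (ℝ ∙ e₄)) :=
      Submodule.mem_sup_right (Submodule.mem_sup_left (Submodule.mem_span_singleton_self w))
    have he₄V : e₄ ∈ (ℝ ∙ z) ⊔ ((ℝ ∙ w) ⊔ (ℝ ∙ e₄)) :=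
      Submodule.mem_sup_right (Submodule.mem_sup_right (Submodule.mem_span_singleton_self e₄))
    obtain ⟨u, -, huV⟩ : ∃ u, u ∈ (⊤ : Submodule ℝ L) ∧
        u ∉ (ℝ ∙ z) ⊔ ((ℝ ∙ w) ⊔ (ℝ ∙ e₄)) := by
      apply SetLike.exists_of_lt
      refine lt_top_iff_ne_top.mpr fun he => ?_
      have t1 := aux_finrank_sup_le (ℝ ∙ w) (ℝ ∙ e₄)
      have t2 := aux_finrank_sup_le (ℝ ∙ z) ((ℝ ∙ w) ⊔ (ℝ ∙ e₄))
      have := aux_frs (L := L) z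
      have := aux_frs (L := L) w
      have := aux_frs (L := L) e₄
      rw [he, finrank_top, hdim] at t2
      omega
    have hDV : (LieModule.lowerCentralSeries ℝ L L 1).toSubmodule ≤
        (ℝ ∙ z) ⊔ ((ℝ ∙ w) ⊔ (ℝ ∙ e₄)) := by
      intro d hd
      obtain ⟨a, b, hab⟩ := hdD' d hd
      rw [← hab]
      exact Submodule.add_mem _ (Submodule.smul_mem _ _ hzV) (Submodule.smul_mem _ _ hwV)
    by_cases hcu : ⁅e₄, u⁆ ∈ (LieModule.lowerCentralSeries ℝ L L 2).toSubmodule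
    · -- impossible: the derived algebra would be 1-dimensional
      exfalso
      have hbrDz : ∀ a d : L, d ∈ LieModule.lowerCentralSeries ℝ L L 1 →
          ⁅a, d⁆ ∈ (ℝ ∙ z : Submodule ℝ L) := by
        intro a d hd
        rw [hspanz]
        exact hbrD a d hd
      have hlt1 : (LieModule.lowerCentralSeries ℝ L L 1).toSubmodule <
          (ℝ ∙ e₄) ⊔ (LieModule.lowerCentralSeries ℝ L L 1).toSubmodule := by
        refine lt_of_le_of_ne le_sup_right fun he => he₄D ?_
        rw [he]; exact Submodule.mem_sup_left (Submodule.mem_span_singleton_self e₄)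
      have hsub : (ℝ ∙ e₄) ⊔ (LieModule.lowerCentralSeries ℝ L L 1).toSubmodule ≤
          (ℝ ∙ z) ⊔ ((ℝ ∙ w) ⊔ (ℝ ∙ e₄)) := by
        refine sup_le ?_ hDV
        rw [Submodule.span_singleton_le_iff_mem]
        exact he₄V
      have hunot : u ∉ (ℝ ∙ e₄) ⊔ (LieModule.lowerCentralSeries ℝ L L 1).toSubmodule :=
        fun hmem => huV (hsub hmem)
      have hlt2 : (ℝ ∙ e₄) ⊔ (LieModule.lowerCentralSeries ℝ L L 1).toSubmodule <
          (ℝ ∙ u) ⊔ ((ℝ ∙ e₄) ⊔ (LieModule.lowerCentralSeries ℝ L L 1).toSubmodule) := by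
        refine lt_of_le_of_ne le_sup_right fun he => hunot ?_
        rw [he]; exact Submodule.mem_sup_left (Submodule.mem_span_singleton_self u)
      have hsp : Submodule.span ℝ
          ({u} ∪ ({e₄} ∪ ((LieModule.lowerCentralSeries ℝ L L 1).toSubmodule : Set L))) = ⊤ := by
        rw [Submodule.span_union, Submodule.span_union, Submodule.span_eq]
        have f1 := Submodule.finrank_lt_finrank_of_lt hlt1
        have f2 := Submodule.finrank_lt_finrank_of_lt hlt2
        have f3 := Submodule.finrank_le
          ((ℝ ∙ u) ⊔ ((ℝ ∙ e₄) ⊔ (LieModule.lowerCentralSeries ℝ L L 1).toSubmodule))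
        rw [hdim] at f3
        exact Submodule.eq_top_of_finrank_eq (by omega)
      have key : ∀ p ∈ ({u} ∪ ({e₄} ∪
            ((LieModule.lowerCentralSeries ℝ L L 1).toSubmodule : Set L))),
          ∀ q ∈ ({u} ∪ ({e₄} ∪
            ((LieModule.lowerCentralSeries ℝ L L 1).toSubmodule : Set L))),
          ⁅p, q⁆ ∈ (ℝ ∙ z : Submodule ℝ L) := by
        rintro p (rfl | rfl | hp) q (rfl | rfl | hq)
        · rw [lie_self]; exact Submodule.zero_mem _
        · rw [← lie_skew]
          refine Submodule.neg_mem _ ?_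
          rw [hspanz]; exact hcu
        · exact hbrDz _ _ hq
        · rw [hspanz]; exact hcu
        · rw [lie_self]; exact Submodule.zero_mem _
        · exact hbrDz _ _ hq
        · rw [← lie_skew]
          exact Submodule.neg_mem _ (hbrDz _ _ hp)
        · rw [← lie_skew]
          exact Submodule.neg_mem _ (hbrDz _ _ hp)
        · exact hbrDz _ _ hq
      have hDle : (LieModule.lowerCentralSeries ℝ L L 1).toSubmodule ≤
          (ℝ ∙ z : Submodule ℝ L) := fun m hm =>
        aux_lcs1_le (fun x y =>
          aux_bracket_span key x (hsp ▸ Submodule.mem_top) y (hsp ▸ Submodule.mem_top)) m hm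
      have := Submodule.finrank_mono hDle
      have := aux_frs (L := L) z
      omega
    · -- genuine 𝔫₄ case
      obtain ⟨a, b, hab⟩ := hdD' _ (aux_mem_lcs1 e₄ u)
      have hb0 : b ≠ 0 := by
        rintro rfl
        apply hcu
        rw [← hab, zero_smul, add_zero, ← hspanz]
        exact Submodule.smul_mem _ _ (Submodule.mem_span_singleton_self z)
      obtain ⟨t, htdef⟩ : ∃ t : L, t = b⁻¹ • u := ⟨_, rfl⟩
      have het : ⁅e₄, t⁆ = (b⁻¹ * a) • z + w := by
        rw [htdef, lie_smul, ← hab, smul_add, smul_smul, smul_smul, inv_mul_cancel₀ hb0,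
          one_smul]
      obtain ⟨β, hβ⟩ := hdC _ (hbrD t w hwD)
      obtain ⟨e₃, h3def⟩ : ∃ e₃ : L, e₃ = t - (b⁻¹ * a) • w - β • e₄ := ⟨_, rfl⟩
      have h43 : ⁅e₄, e₃⁆ = w := by
        rw [h3def, lie_sub, lie_sub, lie_smul, lie_smul, het, hw4, lie_self, smul_zero,
          sub_zero, add_sub_cancel_left]
      have h3w : ⁅e₃, w⁆ = 0 := by
        rw [h3def, sub_lie, sub_lie, smul_lie, smul_lie, ← hβ, lie_self, hw4, smul_zero,
          sub_zero, sub_self]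
      have hw3 : ⁅w, e₃⁆ = 0 := by rw [← lie_skew, h3w, neg_zero]
      have h34 : ⁅e₃, e₄⁆ = -w := by rw [← lie_skew, h43]
      have h24 : ⁅w, e₄⁆ = -z := by rw [← lie_skew, hw4]
      -- linear independence of z, w, e₃, e₄
      have li : LinearIndependent ℝ ![z, w, e₃, e₄] := by
        rw [show (![z, w, e₃, e₄]) = Fin.cons z ![w, e₃, e₄] from rfl,
          linearIndependent_fin_cons]
        constructor
        · rw [show (![w, e₃, e₄]) = Fin.cons w ![e₃, e₄] from rfl, linearIndependent_fin_cons]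
          constructor
          · rw [show (![e₃, e₄]) = Fin.cons e₃ ![e₄] from rfl, linearIndependent_fin_cons]
            constructor
            · exact linearIndependent_unique_iff.mpr he₄0
            · -- e₃ ∉ span {e₄}
              intro hmem
              obtain ⟨cc, hcc⟩ := (Submodule.mem_span_range_iff_exists_fun ℝ).mp hmem
              rw [Fin.sum_univ_one] at hcc
              apply hw0
              rw [← h43, ← hcc]
              simp only [Matrix.cons_val_zero, lie_smul, lie_self, smul_zero]
          · -- w ∉ span {e₃, e₄}
            intro hmem
            obtain ⟨cc, hcc⟩ := (Submodule.mem_span_range_iff_exists_fun ℝ).mp hmem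
            rw [Fin.sum_univ_two] at hcc
            simp only [Matrix.cons_val_zero, Matrix.cons_val_one, Matrix.head_cons] at hcc
            -- bracket with e₃ gives cc 1 = 0
            have e1 : cc 1 • w = 0 := by
              have h' := h3w
              rw [← hcc, lie_add, lie_smul, lie_smul, lie_self, h34, smul_zero, zero_add,
                smul_neg] at h'
              rwa [← neg_eq_zero, neg_neg] at h' 
              -- h' : -(cc 1 • w) = 0
            have hcc1 : cc 1 = 0 := by
              rcases smul_eq_zero.mp e1 with h | h
              · exact h
              · exact absurd h hw0
            rw [hcc1, zero_smul, add_zero] at hcc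
            -- now w = cc 0 • e₃, so z = cc 0 • w and then cc 0 • z = 0
            have e2 : z = cc 0 • w := by
              conv_lhs => rw [← hw4, ← hcc]
              rw [lie_smul, h43]
            have e3 : cc 0 • z = 0 := by
              have h' := hza e₄
              rw [e2, lie_smul, hw4] at h'
              exact h'
            rcases smul_eq_zero.mp e3 with h | h
            · rw [h, zero_smul] at e2
              exact hz0 e2
            · exact hz0 h
        · -- z ∉ span {w, e₃, e₄}
          intro hmem
          obtain ⟨cc, hcc⟩ := (Submodule.mem_span_range_iff_exists_fun ℝ).mp hmem
          rw [Fin.sum_univ_three] at hcc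
          simp only [Matrix.cons_val_zero, Matrix.cons_val_one, Matrix.head_cons,
            Matrix.cons_val_two, Matrix.tail_cons] at hcc
          -- bracket with e₄
          have e1 : cc 0 • z + cc 1 • w = 0 := by
            have h' := hza e₄
            rw [← hcc, lie_add, lie_add, lie_smul, lie_smul, lie_smul, hw4, h43, lie_self,
              smul_zero, add_zero] at h'
            exact h'
          have hcc1 : cc 1 = 0 := by
            by_contra hcc1
            apply hwC
            rw [← hspanz]
            refine Submodule.mem_span_singleton.mpr ⟨-((cc 1)⁻¹ * cc 0), ?_⟩
            have h5 : cc 1 • w = -(cc 0 • z) := eq_neg_of_add_eq_zero_right e1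
            rw [neg_smul, mul_smul, ← smul_neg, ← h5, smul_smul, inv_mul_cancel₀ hcc1,
              one_smul]
          rw [hcc1, zero_smul, add_zero] at e1
          have hcc0 : cc 0 = 0 := by
            rcases smul_eq_zero.mp e1 with h | h
            · exact h
            · exact absurd h hz0
          rw [hcc0, hcc1, zero_smul, zero_smul, zero_add, zero_add] at hcc
          -- z = cc 2 • e₄
          have e2 : cc 2 • z = 0 := by
            have h' := hzb w
            rw [← hcc, smul_lie, hw4] at h'
            exact h' 
          rcases smul_eq_zero.mp e2 with h | h
          · rw [h, zero_smul] at hcc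
            exact hz0 hcc.symm
          · exact hz0 h
      refine ⟨basisOfLinearIndependentOfCardEqFinrank li (by simp [hdim]),
        Or.inr (Or.inr fun i j => ?_)⟩
      have hb : ∀ i, basisOfLinearIndependentOfCardEqFinrank li (by simp [hdim]) i
          = ![z, w, e₃, e₄] i := fun i => by
        rw [coe_basisOfLinearIndependentOfCardEqFinrank]
      fin_cases i <;> fin_cases j <;>
        simp [hb, Prod.ext_iff, hza, hzb, h43, h34, hw4, h24, h3w, hw3, lie_self]
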